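/- In the degenerate setting with blocks I_1,…,I_s, every momentum function M_{lm} with l, m in the same block I_r Poisson commutes with every F_B (for B constant on each block), and any M_{lm} with l,m ∈ I_{r_1} Poisson commutes with any M_{l'm'} with l',m' ∈ I_{r_2} when r_1 ≠ r_2. -/

import Mathlib

open scoped BigOperators

/-- Ambient coordinates on `T*Sⁿ ⊂ ℝ^{n+1} × ℝ^{n+1}`: pairs `(x, p)`. -/
abbrev Phase (N : ℕ) := (Fin N → ℝ) × (Fin N → ℝ)

/-- The canonical Poisson bracket in the ambient coordinates `(x, p)`:
`{F,G} = ∑ₖ (∂F/∂pₖ ∂G/∂xₖ - ∂F/∂xₖ ∂G/∂pₖ)`. -/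
noncomputable def pb {N : ℕ} (F G : Phase N → ℝ) (z : Phase N) : ℝ :=
  ∑ k, (fderiv ℝ F z ((0 : Fin N → ℝ), Pi.single k 1)
          * fderiv ℝ G z (Pi.single k 1, (0 : Fin N → ℝ))
      - fderiv ℝ F z (Pi.single k 1, (0 : Fin N → ℝ))
          * fderiv ℝ G z ((0 : Fin N → ℝ), Pi.single k 1))

/-- `T*Sⁿ` realized as the constraint set `{|x| = 1, ⟨x,p⟩ = 0}`. -/
def TS (N : ℕ) : Set (Phase N) := {z | (∑ k, (z.1 k)^2 = 1) ∧ (∑ k, z.1 k * z.2 k = 0)}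

/-- Momentum function `M_{ij}` of the rotation `Xⁱ ∂_{Xʲ} - Xʲ ∂_{Xⁱ}`. -/
def Mf {N : ℕ} (i j : Fin N) (z : Phase N) : ℝ := z.1 i * z.2 j - z.1 j * z.2 i

/-- The integral of the degenerate Neumann system:
`F_B = (1/2) ∑_{i<j, aᵢ≠aⱼ} ((bᵢ-bⱼ)/(aᵢ-aⱼ)) M_{ij}² + ∑ᵢ bᵢ (Xⁱ)²`. -/
noncomputable def FBdeg {N : ℕ} (a B : Fin N → ℝ) (z : Phase N) : ℝ :=
  (1/2) * ∑ i, ∑ j ∈ Finset.Ioi i,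
      (if a i = a j then 0 else (B i - B j)/(a i - a j)) * (Mf i j z)^2
    + ∑ i, B i * (z.1 i)^2

noncomputable section Aux

variable {N : ℕ}

/-- coordinate functionals -/
def Xc (i : Fin N) : Phase N →L[ℝ] ℝ :=
  (ContinuousLinearMap.proj i).comp (ContinuousLinearMap.fst ℝ (Fin N → ℝ) (Fin N → ℝ))

def Pc (i : Fin N) : Phase N →L[ℝ] ℝ :=
  (ContinuousLinearMap.proj i).comp (ContinuousLinearMap.snd ℝ (Fin N → ℝ) (Fin N → ℝ))

@[simp] lemma Xc_apply (i : Fin N) (v : Phase N) : Xc i v = v.1 i := rfl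
@[simp] lemma Pc_apply (i : Fin N) (v : Phase N) : Pc i v = v.2 i := rfl

lemma hasFDerivAt_X (i : Fin N) (z : Phase N) :
    HasFDerivAt (fun w : Phase N => w.1 i) (Xc i) z := (Xc i).hasFDerivAt

lemma hasFDerivAt_P (i : Fin N) (z : Phase N) :
    HasFDerivAt (fun w : Phase N => w.2 i) (Pc i) z := (Pc i).hasFDerivAt

/-- derivative of `Mf i j` -/
def LM (i j : Fin N) (z : Phase N) : Phase N →L[ℝ] ℝ :=
  z.1 i • Pc j + z.2 j • Xc i - (z.1 j • Pc i + z.2 i • Xc j)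

lemma LM_apply (i j : Fin N) (z v : Phase N) :
    LM i j z v = z.1 i * v.2 j + z.2 j * v.1 i - (z.1 j * v.2 i + z.2 i * v.1 j) := by
  simp [LM, smul_eq_mul]

lemma hasFDerivAt_Mf (i j : Fin N) (z : Phase N) :
    HasFDerivAt (Mf i j) (LM i j z) z := by
  have h := ((hasFDerivAt_X i z).mul (hasFDerivAt_P j z)).sub
    ((hasFDerivAt_X j z).mul (hasFDerivAt_P i z))
  exact h

lemma hasFDerivAt_sq {f : Phase N → ℝ} {f' : Phase N →L[ℝ] ℝ} {z : Phase N}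
    (h : HasFDerivAt f f' z) :
    HasFDerivAt (fun w => (f w)^2) ((2 * f z) • f') z := by
  have := h.fun_mul h
  simpa [pow_two, two_mul, add_smul] using this

lemma pb_Mf_left (l m : Fin N) (G : Phase N → ℝ) (z : Phase N) :
    pb (Mf l m) G z
      = z.1 l * fderiv ℝ G z (Pi.single m 1, (0 : Fin N → ℝ))
        - z.1 m * fderiv ℝ G z (Pi.single l 1, (0 : Fin N → ℝ))
        + (z.2 l * fderiv ℝ G z ((0 : Fin N → ℝ), Pi.single m 1)
           - z.2 m * fderiv ℝ G z ((0 : Fin N → ℝ), Pi.single l 1)) := by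
  unfold pb
  set_option maxRecDepth 4000 in
  simp only [(hasFDerivAt_Mf l m z).fderiv, LM_apply, Pi.zero_apply, mul_zero, add_zero,
    zero_add, Pi.single_apply]
  have key : ∀ k : Fin N,
      (z.1 l * (if m = k then (1:ℝ) else 0) - z.1 m * (if l = k then (1:ℝ) else 0))
          * fderiv ℝ G z (Pi.single k 1, (0 : Fin N → ℝ))
        - (z.2 m * (if l = k then (1:ℝ) else 0) - z.2 l * (if m = k then (1:ℝ) else 0))
          * fderiv ℝ G z ((0 : Fin N → ℝ), Pi.single k 1)
      = (if m = k then z.1 l * fderiv ℝ G z (Pi.single k 1, (0 : Fin N → ℝ))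
            + z.2 l * fderiv ℝ G z ((0 : Fin N → ℝ), Pi.single k 1) else 0)
        - (if l = k then z.1 m * fderiv ℝ G z (Pi.single k 1, (0 : Fin N → ℝ))
            + z.2 m * fderiv ℝ G z ((0 : Fin N → ℝ), Pi.single k 1) else 0) := by
    intro k; split_ifs <;> ring
  rw [Finset.sum_congr rfl (fun k _ => key k), Finset.sum_sub_distrib,
    Finset.sum_ite_eq, Finset.sum_ite_eq]
  simp only [Finset.mem_univ, if_true]
  ring

def cf (a B : Fin N → ℝ) (i j : Fin N) : ℝ :=
  if a i = a j then 0 else (B i - B j)/(a i - a j)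

lemma cf_symm (a B : Fin N → ℝ) (i j : Fin N) : cf a B j i = cf a B i j := by
  unfold cf
  by_cases h : a i = a j
  · rw [if_pos h, if_pos h.symm]
  · rw [if_neg (fun hh => h hh.symm), if_neg h, ← neg_sub (B i), ← neg_sub (a i),
      neg_div_neg_eq]

lemma Mf_antisymm (i j : Fin N) (z : Phase N) : Mf j i z = - Mf i j z := by
  simp only [Mf]; ring

lemma sum_Ioi_guard (f : Fin N → ℝ) (i : Fin N) :
    ∑ j ∈ Finset.Ioi i, f j = ∑ j, if i < j then f j else 0 := by
  rw [show Finset.Ioi i = Finset.univ.filter (fun j => i < j) by ext j; simp,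
    Finset.sum_filter]

lemma Ioi_delta_collapse (g : Fin N → Fin N → ℝ) (w : Fin N → ℝ) (t : Fin N)
    (hg : ∀ i j, g i j = (if i = t then w j else 0) + (if j = t then w i else 0))
    (hw : w t = 0) :
    ∑ i, ∑ j ∈ Finset.Ioi i, g i j = ∑ j, w j := by
  have h1 : ∀ i : Fin N, ∑ j ∈ Finset.Ioi i, g i j
      = (if i = t then ∑ j, (if i < j then w j else 0) else 0)
        + (if i < t then w i else 0) := by
    intro i
    simp_rw [hg]
    rw [Finset.sum_add_distrib]
    congr 1
    · by_cases h : i = t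
      · simp only [h, if_true, sum_Ioi_guard]
      · simp [h]
    · rw [Finset.sum_ite_eq' (Finset.Ioi i) t (fun _ => w i)]
      simp [Finset.mem_Ioi]
  rw [Finset.sum_congr rfl (fun i _ => h1 i), Finset.sum_add_distrib,
    Finset.sum_ite_eq' Finset.univ t]
  simp only [Finset.mem_univ, if_true]
  rw [← Finset.sum_add_distrib]
  apply Finset.sum_congr rfl
  intro j _
  rcases lt_trichotomy t j with h | h | h
  · simp [h, asymm h]
  · rw [← h]; simp [hw]
  · simp [h, asymm h]

lemma hasFDerivAt_FBdeg (a B : Fin N → ℝ) (z : Phase N) :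
    HasFDerivAt (FBdeg a B)
      ((1/2 : ℝ) • (∑ i, ∑ j ∈ Finset.Ioi i, cf a B i j • ((2 * Mf i j z) • LM i j z))
        + ∑ i, B i • ((2 * z.1 i) • Xc i)) z := by
  unfold FBdeg
  apply HasFDerivAt.add
  · exact HasFDerivAt.const_mul (HasFDerivAt.fun_sum fun i _ => HasFDerivAt.fun_sum fun j _ =>
      (hasFDerivAt_sq (hasFDerivAt_Mf i j z)).const_mul _) _
  · exact HasFDerivAt.fun_sum fun i _ => (hasFDerivAt_sq (hasFDerivAt_X i z)).const_mul _

lemma fderiv_FBdeg_x (a B : Fin N → ℝ) (z : Phase N) (t : Fin N) :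
    fderiv ℝ (FBdeg a B) z (Pi.single t 1, (0 : Fin N → ℝ))
      = (∑ j, cf a B t j * Mf t j z * z.2 j) + 2 * B t * z.1 t := by
  rw [(hasFDerivAt_FBdeg a B z).fderiv]
  simp only [ContinuousLinearMap.add_apply, ContinuousLinearMap.smul_apply,
    ContinuousLinearMap.sum_apply, LM_apply, Xc_apply, smul_eq_mul, Pi.zero_apply,
    mul_zero, zero_add, add_zero, Pi.single_apply]
  have hcol : ∑ i, ∑ j ∈ Finset.Ioi i,
      cf a B i j * (2 * Mf i j z *
        ((z.2 j * if i = t then (1:ℝ) else 0) - z.2 i * if j = t then (1:ℝ) else 0))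
      = ∑ j, cf a B t j * (2 * Mf t j z * z.2 j) := by
    apply Ioi_delta_collapse _ _ t ?_ (by simp [Mf])
    intro i j
    by_cases hi : i = t <;> by_cases hj : j = t
    · simp only [hi, hj, if_true]; simp [Mf]
    · simp [hi, hj]
    · simp only [hj, hi, if_false, if_true, eq_self_iff_true]
      simp only [mul_zero, zero_sub, zero_add, mul_one]
      rw [cf_symm a B t i, Mf_antisymm t i z]; ring
    · simp [hi, hj]
  have hw : ∑ j, cf a B t j * (2 * Mf t j z * z.2 j)
      = 2 * ∑ j, cf a B t j * Mf t j z * z.2 j := by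
    rw [Finset.mul_sum]; exact Finset.sum_congr rfl fun j _ => by ring
  have hb : ∑ i, B i * (2 * z.1 i * if i = t then (1:ℝ) else 0) = 2 * B t * z.1 t := by
    have h1 : ∀ i : Fin N, B i * (2 * z.1 i * if i = t then (1:ℝ) else 0)
        = if i = t then B i * (2 * z.1 i) else 0 := fun i => by split_ifs <;> ring
    rw [Finset.sum_congr rfl fun i _ => h1 i, Finset.sum_ite_eq' Finset.univ t]
    simp only [Finset.mem_univ, if_true]; ring
  linear_combination (1/2 : ℝ) * hcol + (1/2 : ℝ) * hw + hb

lemma fderiv_FBdeg_p (a B : Fin N → ℝ) (z : Phase N) (t : Fin N) :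
    fderiv ℝ (FBdeg a B) z ((0 : Fin N → ℝ), Pi.single t 1)
      = ∑ j, cf a B t j * Mf j t z * z.1 j := by
  rw [(hasFDerivAt_FBdeg a B z).fderiv]
  simp only [ContinuousLinearMap.add_apply, ContinuousLinearMap.smul_apply,
    ContinuousLinearMap.sum_apply, LM_apply, Xc_apply, smul_eq_mul, Pi.zero_apply,
    mul_zero, zero_add, add_zero, Pi.single_apply, zero_mul, sub_zero, Finset.sum_const_zero]
  have hcol : ∑ i, ∑ j ∈ Finset.Ioi i,
      cf a B i j * (2 * Mf i j z *
        ((z.1 i * if j = t then (1:ℝ) else 0) - z.1 j * if i = t then (1:ℝ) else 0))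
      = ∑ j, cf a B t j * (2 * Mf j t z * z.1 j) := by
    apply Ioi_delta_collapse _ _ t ?_ (by simp [Mf])
    intro i j
    by_cases hi : i = t <;> by_cases hj : j = t
    · simp only [hi, hj, if_true]; simp [Mf]
    · -- i = t, j ≠ t : LHS = cf t j * (2*M_tj*(0 - x_j)) ; RHS = cf t j * (2 * Mf j t z * x_j)
      simp only [hi, hj, if_true, if_false]
      simp only [mul_zero, zero_sub, mul_one]
      rw [Mf_antisymm j t z]; ring
    · -- j = t, i ≠ t : LHS = cf i t * (2*M_it*(x_i)) ; RHS = cf t i * (2 * Mf i t z * x_i)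
      simp only [hj, hi, if_true, if_false]
      simp only [mul_one, mul_zero, sub_zero, zero_add]
      rw [cf_symm a B t i]
    · simp [hi, hj]
  have hw : ∑ j, cf a B t j * (2 * Mf j t z * z.1 j)
      = 2 * ∑ j, cf a B t j * Mf j t z * z.1 j := by
    rw [Finset.mul_sum]; exact Finset.sum_congr rfl fun j _ => by ring
  linear_combination (1/2 : ℝ) * hcol + (1/2 : ℝ) * hw

end Aux

/-- In the degenerate setting (blocks of indices on which `a` is
constant; `l, m` lie in the same block iff `a l = a m`):
every momentum function `M_{lm}` with `l, m` in the same block Poisson commutes with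
every `F_B` (for `B` constant on each block), and any `M_{lm}` with `l, m` in the
block `I_{r₁}` Poisson commutes with any `M_{l'm'}` with `l', m'` in the block
`I_{r₂}` when `r₁ ≠ r₂`. -/
theorem block_rotations_commute_with_integrals (n : ℕ) (a : Fin (n+1) → ℝ) :
    (∀ B : Fin (n+1) → ℝ, (∀ i j, a i = a j → B i = B j) →
      ∀ l m : Fin (n+1), a l = a m →
        ∀ z ∈ TS (n+1), pb (Mf l m) (FBdeg a B) z = 0) ∧
    (∀ l m l' m' : Fin (n+1), a l = a m → a l' = a m' → a l ≠ a l' →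
        ∀ z ∈ TS (n+1), pb (Mf l m) (Mf l' m') z = 0) := by
  constructor
  · intro B hB l m ha z _
    rw [pb_Mf_left, fderiv_FBdeg_x, fderiv_FBdeg_x, fderiv_FBdeg_p, fderiv_FBdeg_p]
    have hBlm : B l = B m := hB l m ha
    have hc : ∀ j, cf a B m j = cf a B l j := fun j => by unfold cf; rw [← ha, ← hBlm]
    simp only [hc]
    have main : z.1 l * (∑ j, cf a B l j * Mf m j z * z.2 j)
        - z.1 m * (∑ j, cf a B l j * Mf l j z * z.2 j)
        + (z.2 l * (∑ j, cf a B l j * Mf j m z * z.1 j)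
           - z.2 m * (∑ j, cf a B l j * Mf j l z * z.1 j)) = 0 := by
      rw [Finset.mul_sum, Finset.mul_sum, Finset.mul_sum, Finset.mul_sum,
        ← Finset.sum_sub_distrib, ← Finset.sum_sub_distrib, ← Finset.sum_add_distrib]
      exact Finset.sum_eq_zero fun j _ => by simp only [Mf]; ring
    linear_combination main - 2 * z.1 l * z.1 m * hBlm
  · intro l m l' m' ha ha' hne z _
    have h1 : l' ≠ m := fun h => hne (by rw [ha, ← h])
    have h2 : m' ≠ m := fun h => hne (by rw [ha, ← h, ← ha'])
    have h3 : l' ≠ l := fun h => hne (by rw [← h])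
    have h4 : m' ≠ l := fun h => hne (by rw [← h, ← ha'])
    rw [pb_Mf_left]
    simp only [(hasFDerivAt_Mf l' m' z).fderiv, LM_apply, Pi.zero_apply, mul_zero, add_zero,
      zero_add, Pi.single_apply, h1, h2, h3, h4, if_false, mul_one, mul_zero, sub_zero, zero_sub]
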